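/- Let the activation function g and the loss ℒ (in its second argument) be differentiable, and let θ be a stationary point of the empirical risk of the original network, i.e. ∇_θ R_emp(θ) = 0. Then for every choice of biases ζ_k ∈ ℝ, the point θ̂ = β_{ζ0}(θ) (the β embedding with all outgoing weights s set to zero) is a stationary point of the empirical risk of the enlarged network: ∇_{θ̂} R̂_emp(θ̂) = 0. -/
import Mathlib


/-- Parameters of a fully connected feedforward network: `w ℓ j i` is the weight from
unit `i` of layer `ℓ-1` to unit `j` of layer `ℓ`, and `b ℓ j` is the bias of unit `j`
of layer `ℓ`.  Layers are numbered `1, …, L` (layer `0` is the input); units within a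
layer are numbered from `0`, so layer `ℓ` consists of the units `0, …, H ℓ - 1`. -/
structure NNParams where
  w : ℕ → ℕ → ℕ → ℝ
  b : ℕ → ℕ → ℝ

/-- `layerOut g H θ x ℓ i` : the output of unit `i` of layer `ℓ` on input `x`
(`layerOut g H θ x 0 = x`, and for `ℓ ≥ 1` it is `g` applied to the pre-activation). -/
noncomputable def layerOut (g : ℝ → ℝ) (H : ℕ → ℕ) (θ : NNParams) (x : ℕ → ℝ) :
    ℕ → ℕ → ℝ
  | 0, i => x i
  | ℓ + 1, i =>
      g (∑ j ∈ Finset.range (H ℓ), θ.w (ℓ + 1) i j * layerOut g H θ x ℓ j + θ.b (ℓ + 1) i)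

/-- Pre-activation `a_j^ℓ(x, θ)` of unit `j` of layer `ℓ ≥ 1`:
`a_j^ℓ = ∑_{i < H (ℓ-1)} w_{ji}^ℓ · (output of unit i of layer ℓ-1) + σ_j^ℓ`.
The outputs of the last layer `L` are `f_r(x,θ) = preact g H θ x L r` (linear output units). -/
noncomputable def preact (g : ℝ → ℝ) (H : ℕ → ℕ) (θ : NNParams) (x : ℕ → ℝ)
    (ℓ j : ℕ) : ℝ :=
  ∑ i ∈ Finset.range (H (ℓ - 1)), θ.w ℓ j i * layerOut g H θ x (ℓ - 1) i + θ.b ℓ j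

/-- Empirical risk `R_emp(θ) = (1/P) ∑_{p<P} ℒ(y^p, f(x^p, θ))`, where the network has
`L` layers with layer sizes given by `H`, the training inputs are `X p` and the labels
`Y p`, and `m` is the output dimension seen by the loss. -/
noncomputable def Remp (g : ℝ → ℝ) (H : ℕ → ℕ) (L P : ℕ) {m : ℕ}
    (X Y : ℕ → ℕ → ℝ) (loss : (ℕ → ℝ) → (Fin m → ℝ) → ℝ) (θ : NNParams) : ℝ :=
  (1 / (P : ℝ)) * ∑ p ∈ Finset.range P,
    loss (Y p) (fun r => preact g H θ (X p) L r)

/-- Layer sizes of the network enlarged by adding `K` new neurons to layer `l`. -/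
def enlargeH (H : ℕ → ℕ) (l K : ℕ) : ℕ → ℕ :=
  fun ℓ => if ℓ = l then H l + K else H ℓ

/-- The embedding `α_{ζv}` : copy all parameters, give the `k`-th new neuron of layer `l`
(`k = 0, …, K-1`, i.e. unit `H l + k`) the bias `ζ k` and incoming weights `v k`, and
set all weights from the new neurons to layer `l+1` to zero. -/
noncomputable def alphaEmb (H : ℕ → ℕ) (l K : ℕ) (ζ : ℕ → ℝ) (v : ℕ → ℕ → ℝ)
    (θ : NNParams) : NNParams where
  w := fun ℓ j i =>
    if ℓ = l ∧ H l ≤ j then v (j - H l) i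
    else if ℓ = l + 1 ∧ H l ≤ i then 0
    else θ.w ℓ j i
  b := fun ℓ j => if ℓ = l ∧ H l ≤ j then ζ (j - H l) else θ.b ℓ j

/-- The embedding `β_{ζs}` : copy all parameters except the biases of layer `l+1`, give
the `k`-th new neuron of layer `l` the bias `ζ k` and zero incoming weights, set the
outgoing weight from the `k`-th new neuron to unit `j` of layer `l+1` to `s j k`, and
replace the bias of unit `j` of layer `l+1` by `σ_j - ∑_{k<K} s j k · g (ζ k)`. -/
noncomputable def betaEmb (g : ℝ → ℝ) (H : ℕ → ℕ) (l K : ℕ) (ζ : ℕ → ℝ)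
    (s : ℕ → ℕ → ℝ) (θ : NNParams) : NNParams where
  w := fun ℓ j i =>
    if ℓ = l ∧ H l ≤ j then 0
    else if ℓ = l + 1 ∧ H l ≤ i then s j (i - H l)
    else θ.w ℓ j i
  b := fun ℓ j =>
    if ℓ = l ∧ H l ≤ j then ζ (j - H l)
    else if ℓ = l + 1 then θ.b (l + 1) j - ∑ k ∈ Finset.range K, s j k * g (ζ k)
    else θ.b ℓ j

/-- The embedding `γ_λ` : duplicate unit `h` of layer `l` into each of the `K` new
neurons (same bias and incoming weights as unit `h`), and split the outgoing weights:
unit `h` keeps `lam 0 · w_{jh}^{l+1}` and the `k`-th new neuron (`k = 0, …, K-1`,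
i.e. unit `H l + k`, corresponding to `λ_{k+1}` of the paper) gets
`lam (k+1) · w_{jh}^{l+1}`; all other parameters are copied. -/
noncomputable def gammaEmb (H : ℕ → ℕ) (l K : ℕ) (h : ℕ) (lam : ℕ → ℝ)
    (θ : NNParams) : NNParams where
  w := fun ℓ j i =>
    if ℓ = l ∧ H l ≤ j then θ.w l h i
    else if ℓ = l + 1 ∧ i = h then lam 0 * θ.w (l + 1) j h
    else if ℓ = l + 1 ∧ H l ≤ i then lam (i - H l + 1) * θ.w (l + 1) j h
    else θ.w ℓ j i
  b := fun ℓ j => if ℓ = l ∧ H l ≤ j then θ.b l h else θ.b ℓ j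

/-- `θ` with the single weight `w ℓ j i` replaced by `t`. -/
noncomputable def updW (θ : NNParams) (ℓ j i : ℕ) (t : ℝ) : NNParams :=
  ⟨fun ℓ' j' i' => if ℓ' = ℓ ∧ j' = j ∧ i' = i then t else θ.w ℓ' j' i', θ.b⟩

/-- `θ` with the single bias `b ℓ j` replaced by `t`. -/
noncomputable def updB (θ : NNParams) (ℓ j : ℕ) (t : ℝ) : NNParams :=
  ⟨θ.w, fun ℓ' j' => if ℓ' = ℓ ∧ j' = j then t else θ.b ℓ' j'⟩

/-- `∇ R_emp(θ) = 0` : every partial derivative of the empirical risk with respect to an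
actual network parameter (a weight `w ℓ j i` or a bias `b ℓ j`, `1 ≤ ℓ ≤ L`, `j < H ℓ`,
`i < H (ℓ-1)`) vanishes at `θ`. -/
def IsCritical (g : ℝ → ℝ) (H : ℕ → ℕ) (L P : ℕ) {m : ℕ}
    (X Y : ℕ → ℕ → ℝ) (loss : (ℕ → ℝ) → (Fin m → ℝ) → ℝ) (θ : NNParams) : Prop :=
  (∀ ℓ j i, 1 ≤ ℓ → ℓ ≤ L → j < H ℓ → i < H (ℓ - 1) →
      deriv (fun t => Remp g H L P X Y loss (updW θ ℓ j i t)) (θ.w ℓ j i) = 0) ∧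
  ∀ ℓ j, 1 ≤ ℓ → ℓ ≤ L → j < H ℓ →
      deriv (fun t => Remp g H L P X Y loss (updB θ ℓ j t)) (θ.b ℓ j) = 0

/-- Layer sizes after enlarging layer `p.1` by `p.2` neurons for each pair in the list. -/
def multiEnlargeH : (ℕ → ℕ) → List (ℕ × ℕ) → (ℕ → ℕ)
  | H, [] => H
  | H, (l, K) :: rest => multiEnlargeH (enlargeH H l K) rest

/-- Composition of `α` embeddings: for each `(l, K)` in the list (in order), add `K` new
neurons to layer `l` via `α` with biases `ζ l` and incoming weights `v l`. -/
noncomputable def multiAlpha (ζ : ℕ → ℕ → ℝ) (v : ℕ → ℕ → ℕ → ℝ) :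
    (ℕ → ℕ) → List (ℕ × ℕ) → NNParams → NNParams
  | _, [], θ => θ
  | H, (l, K) :: rest, θ =>
      multiAlpha ζ v (enlargeH H l K) rest (alphaEmb H l K (ζ l) (v l) θ)

noncomputable def multiBeta (g : ℝ → ℝ) (ζ : ℕ → ℕ → ℝ) (s : ℕ → ℕ → ℕ → ℝ) :
    (ℕ → ℕ) → List (ℕ × ℕ) → NNParams → NNParams
  | _, [], θ => θ
  | H, (l, K) :: rest, θ =>
      multiBeta g ζ s (enlargeH H l K) rest (betaEmb g H l K (ζ l) (s l) θ)

noncomputable def multiGamma (hsel : ℕ → ℕ) (lam : ℕ → ℕ → ℝ) :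
    (ℕ → ℕ) → List (ℕ × ℕ) → NNParams → NNParams
  | _, [], θ => θ
  | H, (l, K) :: rest, θ =>
      multiGamma hsel lam (enlargeH H l K) rest (gammaEmb H l K (hsel l) (lam l) θ)

/-- A single enlargement step: either a `β` embedding with zero outgoing weights, or a
`γ` embedding. -/
inductive EmbStep where
  | beta (l K : ℕ) (ζ : ℕ → ℝ)
  | gamma (l K : ℕ) (h : ℕ) (lam : ℕ → ℝ)

def EmbStep.layer : EmbStep → ℕ
  | .beta l _ _ => l
  | .gamma l _ _ _ => l

def EmbStep.count : EmbStep → ℕ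
  | .beta _ K _ => K
  | .gamma _ K _ _ => K

noncomputable def EmbStep.apply (g : ℝ → ℝ) (H : ℕ → ℕ) (θ : NNParams) : EmbStep → NNParams
  | .beta l K ζ => betaEmb g H l K ζ (fun _ _ => 0) θ
  | .gamma l K h lam => gammaEmb H l K h lam θ

def EmbStep.OK (H : ℕ → ℕ) (L : ℕ) : EmbStep → Prop
  | .beta l _ _ => 1 ≤ l ∧ l + 1 ≤ L
  | .gamma l K h lam => 1 ≤ l ∧ l + 1 ≤ L ∧ h < H l ∧ ∑ i ∈ Finset.range (K + 1), lam i = 1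

noncomputable def applySteps (g : ℝ → ℝ) : (ℕ → ℕ) → List EmbStep → NNParams → NNParams
  | _, [], θ => θ
  | H, st :: rest, θ =>
      applySteps g (enlargeH H st.layer st.count) rest (EmbStep.apply g H θ st)

def stepsH : (ℕ → ℕ) → List EmbStep → (ℕ → ℕ)
  | H, [] => H
  | H, st :: rest => stepsH (enlargeH H st.layer st.count) rest

section BetaAux

private lemma sum_range_add' (f : ℕ → ℝ) (m n : ℕ) :
    ∑ i ∈ Finset.range (m + n), f i
      = ∑ i ∈ Finset.range m, f i + ∑ k ∈ Finset.range n, f (m + k) := by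
  induction n with
  | zero => simp
  | succ n ih =>
      rw [show m + (n + 1) = (m + n) + 1 from rfl, Finset.sum_range_succ, ih,
        Finset.sum_range_succ, add_assoc]

variable {g : ℝ → ℝ} {H : ℕ → ℕ} {l K : ℕ} {φ ψ : NNParams}

/-- Hypotheses relating enlarged parameters `φ` to original parameters `ψ`. -/
private def BetaRel (g : ℝ → ℝ) (H : ℕ → ℕ) (l K : ℕ) (φ ψ : NNParams) : Prop :=
  (∀ ℓ j i, ¬(ℓ = l ∧ H l ≤ j) → ¬(ℓ = l + 1 ∧ H l ≤ i) → φ.w ℓ j i = ψ.w ℓ j i) ∧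
  (∀ ℓ j, ¬(ℓ = l ∧ H l ≤ j) → ℓ ≠ l + 1 → φ.b ℓ j = ψ.b ℓ j) ∧
  (∀ j, ψ.b (l + 1) j = φ.b (l + 1) j +
      ∑ k ∈ Finset.range K, φ.w (l + 1) j (H l + k) * g (φ.b l (H l + k))) ∧
  (∀ k, k < K → (∀ j, φ.w (l + 1) j (H l + k) = 0) ∨ (∀ i, φ.w l (H l + k) i = 0))

private lemma sum_eq (hl1 : 1 ≤ l) (hR : BetaRel g H l K φ ψ) (x : ℕ → ℝ) (ℓ j : ℕ)
    (hj : ℓ + 1 = l → j < H l)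
    (hout : ∀ i, (ℓ = l → i < H l) →
      layerOut g (enlargeH H l K) φ x ℓ i = layerOut g H ψ x ℓ i) :
    ∑ i ∈ Finset.range (enlargeH H l K ℓ),
        φ.w (ℓ + 1) j i * layerOut g (enlargeH H l K) φ x ℓ i + φ.b (ℓ + 1) j
      = ∑ i ∈ Finset.range (H ℓ),
          ψ.w (ℓ + 1) j i * layerOut g H ψ x ℓ i + ψ.b (ℓ + 1) j := by
  obtain ⟨h1, h2, h3, h4⟩ := hR
  by_cases hll : ℓ = l
  · subst hll
    have hEH : enlargeH H ℓ K ℓ = H ℓ + K := by simp [enlargeH]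
    rw [hEH, sum_range_add']
    have hnew : ∀ k ∈ Finset.range K,
        φ.w (ℓ + 1) j (H ℓ + k) * layerOut g (enlargeH H ℓ K) φ x ℓ (H ℓ + k)
          = φ.w (ℓ + 1) j (H ℓ + k) * g (φ.b ℓ (H ℓ + k)) := by
      intro k hk
      rcases h4 k (Finset.mem_range.1 hk) with h | h
      · rw [h j, zero_mul, zero_mul]
      · obtain ⟨l', rfl⟩ : ∃ l', ℓ = l' + 1 :=
          ⟨ℓ - 1, (Nat.succ_pred_eq_of_pos hl1).symm⟩
        have : layerOut g (enlargeH H (l' + 1) K) φ x (l' + 1) (H (l' + 1) + k)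
            = g (φ.b (l' + 1) (H (l' + 1) + k)) := by
          simp only [layerOut, h, zero_mul, Finset.sum_const_zero, zero_add]
        rw [this]
    rw [Finset.sum_congr rfl hnew]
    have hold : ∀ i ∈ Finset.range (H ℓ),
        φ.w (ℓ + 1) j i * layerOut g (enlargeH H ℓ K) φ x ℓ i
          = ψ.w (ℓ + 1) j i * layerOut g H ψ x ℓ i := by
      intro i hi
      have hiH : i < H ℓ := Finset.mem_range.1 hi
      rw [h1 (ℓ + 1) j i (by omega) (by omega), hout i (fun _ => hiH)]
    rw [Finset.sum_congr rfl hold, h3 j]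
    ring
  · have hEH : enlargeH H l K ℓ = H ℓ := by simp [enlargeH, hll]
    rw [hEH]
    have hold : ∀ i ∈ Finset.range (H ℓ),
        φ.w (ℓ + 1) j i * layerOut g (enlargeH H l K) φ x ℓ i
          = ψ.w (ℓ + 1) j i * layerOut g H ψ x ℓ i := by
      intro i hi
      have hguard : ¬(ℓ + 1 = l ∧ H l ≤ j) := by
        rintro ⟨hel, hle⟩; exact absurd (hj hel) (not_lt.2 hle)
      rw [h1 (ℓ + 1) j i hguard (by omega), hout i (fun h => absurd h hll)]
    rw [Finset.sum_congr rfl hold,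
      h2 (ℓ + 1) j (by rintro ⟨hel, hle⟩; exact absurd (hj hel) (not_lt.2 hle)) (by omega)]

private lemma layerOut_eq (hl1 : 1 ≤ l) (hR : BetaRel g H l K φ ψ) (x : ℕ → ℝ) :
    ∀ ℓ j, (ℓ = l → j < H l) →
      layerOut g (enlargeH H l K) φ x ℓ j = layerOut g H ψ x ℓ j := by
  intro ℓ
  induction ℓ with
  | zero => intro j _; rfl
  | succ ℓ ih =>
      intro j hj
      show g _ = g _
      rw [sum_eq hl1 hR x ℓ j hj ih]

private lemma preact_eq (hl1 : 1 ≤ l) {L : ℕ} (hlL : l + 1 ≤ L)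
    (hR : BetaRel g H l K φ ψ) (x : ℕ → ℝ) (r : ℕ) :
    preact g (enlargeH H l K) φ x L r = preact g H ψ x L r := by
  obtain ⟨M, rfl⟩ : ∃ M, L = M + 1 := ⟨L - 1, by omega⟩
  show (∑ i ∈ Finset.range (enlargeH H l K (M + 1 - 1)), _ + _) = _
  simp only [Nat.add_sub_cancel, preact]
  exact sum_eq hl1 hR x M r (by omega) (layerOut_eq hl1 hR x M)

private lemma Remp_eq (hl1 : 1 ≤ l) {L : ℕ} (hlL : l + 1 ≤ L) (P : ℕ) {m : ℕ}
    (X Y : ℕ → ℕ → ℝ) (loss : (ℕ → ℝ) → (Fin m → ℝ) → ℝ)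
    (hR : BetaRel g H l K φ ψ) :
    Remp g (enlargeH H l K) L P X Y loss φ = Remp g H L P X Y loss ψ := by
  unfold Remp
  congr 1
  refine Finset.sum_congr rfl fun p _ => ?_
  congr 1
  funext r
  exact preact_eq hl1 hlL hR (X p) r

private lemma deriv_comp_affine (F : ℝ → ℝ) (b c : ℝ) (hF : deriv F b = 0) :
    deriv (fun t => F (b + t * c)) 0 = 0 := by
  by_cases hc : c = 0
  · simp [hc]
  · have hrw : (fun t => F (b + t * c)) = (fun t => (fun u => F (b + u)) (c * t)) := by
      funext t; rw [mul_comm]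
    rw [hrw]
    have key : ∀ x : ℝ, deriv (fun t => (fun u => F (b + u)) (c * t)) x
        = c * deriv (fun u => F (b + u)) (c * x) := by
      intro x
      set G : ℝ → ℝ := fun u => F (b + u) with hG
      by_cases hd : DifferentiableAt ℝ G (c * x)
      · have hmul : HasDerivAt (fun t : ℝ => c * t) c x := by
          simpa using (hasDerivAt_id x).const_mul c
        have h1 : HasDerivAt (fun t : ℝ => G (c * t)) (deriv G (c * x) * c) x :=
          hd.hasDerivAt.comp x hmul
        rw [h1.deriv, mul_comm]
      · have h2 : ¬ DifferentiableAt ℝ (fun t => G (c * t)) x := by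
          intro h
          apply hd
          have h3 : DifferentiableAt ℝ ((fun t => G (c * t)) ∘ (fun s => c⁻¹ * s)) (c * x) := by
            apply DifferentiableAt.comp
            · simpa [hc] using h
            · fun_prop
          have h4 : ((fun t => G (c * t)) ∘ (fun s => c⁻¹ * s)) = G := by
            funext s
            simp [Function.comp, ← mul_assoc, mul_inv_cancel₀ hc]
          rwa [h4] at h3
        rw [deriv_zero_of_not_differentiableAt hd, deriv_zero_of_not_differentiableAt h2,
          mul_zero]
    rw [key 0]
    have : deriv (fun u => F (b + u)) (c * 0) = 0 := by
      rw [mul_zero, deriv_comp_const_add, add_zero, hF]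
    rw [this, mul_zero]

end BetaAux

private lemma updW_w (θ : NNParams) (ℓ j i : ℕ) (t : ℝ) (ℓ' j' i' : ℕ) :
    (updW θ ℓ j i t).w ℓ' j' i'
      = if ℓ' = ℓ ∧ j' = j ∧ i' = i then t else θ.w ℓ' j' i' := rfl

private lemma updW_b (θ : NNParams) (ℓ j i : ℕ) (t : ℝ) : (updW θ ℓ j i t).b = θ.b := rfl

private lemma updB_w (θ : NNParams) (ℓ j : ℕ) (t : ℝ) : (updB θ ℓ j t).w = θ.w := rfl

private lemma updB_b (θ : NNParams) (ℓ j : ℕ) (t : ℝ) (ℓ' j' : ℕ) :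
    (updB θ ℓ j t).b ℓ' j' = if ℓ' = ℓ ∧ j' = j then t else θ.b ℓ' j' := rfl

/-- If `g` and the loss (in its second argument) are differentiable and
`θ` is a stationary point of the empirical risk of the original network, then for every
choice of new-neuron biases `ζ`, the point `θ̂ = β_{ζ0}(θ)` (the `β` embedding with all
outgoing weights `s = 0`) is a stationary point of the empirical risk of the enlarged
network. -/
theorem betaEmb_zero_is_critical
    (g : ℝ → ℝ) (H : ℕ → ℕ) (L P : ℕ) (X Y : ℕ → ℕ → ℝ)
    (loss : (ℕ → ℝ) → (Fin (H L) → ℝ) → ℝ)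
    (hg : Differentiable ℝ g)
    (hloss : ∀ y : ℕ → ℝ,
      Differentiable ℝ (fun z : EuclideanSpace ℝ (Fin (H L)) => loss y z))
    (l : ℕ) (hl1 : 1 ≤ l) (hlL : l + 1 ≤ L) (K : ℕ) (ζ : ℕ → ℝ) (θ : NNParams)
    (hθ : IsCritical g H L P X Y loss θ)
    (θhat : NNParams) (hemb : θhat = betaEmb g H l K ζ (fun _ _ => 0) θ) :
    IsCritical g (enlargeH H l K) L P X Y loss θhat := by
  subst hemb
  set B := betaEmb g H l K ζ (fun _ _ => 0) θ with hB
  have hEH' : ∀ ℓ', ℓ' ≠ l → enlargeH H l K ℓ' = H ℓ' := by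
    intro ℓ' h; simp [enlargeH, h]
  have hBw : ∀ ℓ j i, ¬(ℓ = l ∧ H l ≤ j) → ¬(ℓ = l + 1 ∧ H l ≤ i) →
      B.w ℓ j i = θ.w ℓ j i := by
    intro ℓ j i h1 h2
    rw [hB]
    simp only [betaEmb]
    rw [if_neg h1, if_neg h2]
  have hBwOut : ∀ j i, H l ≤ i → B.w (l + 1) j i = 0 := by
    intro j i hi
    rw [hB]
    simp [betaEmb, hi]
  have hBwIn : ∀ j i, H l ≤ j → B.w l j i = 0 := by
    intro j i hjl
    rw [hB]
    simp [betaEmb, hjl]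
  have hBb : ∀ ℓ j, ¬(ℓ = l ∧ H l ≤ j) → ℓ ≠ l + 1 → B.b ℓ j = θ.b ℓ j := by
    intro ℓ j h1 h2
    rw [hB]
    simp only [betaEmb]
    rw [if_neg h1, if_neg h2]
  have hBbl1 : ∀ j, B.b (l + 1) j = θ.b (l + 1) j := by
    intro j
    rw [hB]
    simp [betaEmb]
  have hBbζ : ∀ k, B.b l (H l + k) = ζ k := by
    intro k
    rw [hB]
    simp [betaEmb, Nat.le_add_right]
  unfold IsCritical
  constructor
  · -- weights
    intro ℓ j i hℓ1 hℓL hj hi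
    by_cases c1 : ℓ = l ∧ H l ≤ j
    · -- incoming weight of a new neuron : risk is constant
      obtain ⟨rfl, hjl⟩ := c1
      have hconst : (fun t => Remp g (enlargeH H ℓ K) L P X Y loss (updW B ℓ j i t))
          = fun _ => Remp g H L P X Y loss θ := by
        funext t
        apply Remp_eq hl1 hlL
        refine ⟨?_, ?_, ?_, ?_⟩
        · intro ℓ' j' i' g1 g2
          rw [updW_w, if_neg (by rintro ⟨rfl, rfl, rfl⟩; exact g1 ⟨rfl, hjl⟩)]
          exact hBw ℓ' j' i' g1 g2
        · intro ℓ' j' g1 g2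
          rw [updW_b]
          exact hBb ℓ' j' g1 g2
        · intro j'
          have hw0 : ∀ k ∈ Finset.range K,
              (updW B ℓ j i t).w (ℓ + 1) j' (H ℓ + k)
                * g ((updW B ℓ j i t).b ℓ (H ℓ + k)) = 0 := by
            intro k hk
            rw [updW_w, if_neg (by omega), hBwOut j' _ (Nat.le_add_right _ _), zero_mul]
          rw [Finset.sum_eq_zero hw0, add_zero, updW_b, hBbl1 j']
        · intro k hk
          left
          intro j'
          rw [updW_w, if_neg (by omega)]
          exact hBwOut j' _ (Nat.le_add_right _ _)
      rw [hconst]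
      exact deriv_const _ _
    · by_cases c2 : ℓ = l + 1 ∧ H l ≤ i
      · -- outgoing weight of a new neuron
        obtain ⟨rfl, hile⟩ := c2
        obtain ⟨k, rfl⟩ : ∃ k, i = H l + k := ⟨i - H l, by omega⟩
        have hkK : k < K := by
          rw [show l + 1 - 1 = l from rfl, show enlargeH H l K l = H l + K from by
            simp [enlargeH]] at hi
          omega
        have hkey : (fun t => Remp g (enlargeH H l K) L P X Y loss
              (updW B (l + 1) j (H l + k) t))
            = fun t => Remp g H L P X Y loss
                (updB θ (l + 1) j (θ.b (l + 1) j + t * g (ζ k))) := by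
          funext t
          apply Remp_eq hl1 hlL
          refine ⟨?_, ?_, ?_, ?_⟩
          · intro ℓ' j' i' g1 g2
            rw [updW_w,
              if_neg (by rintro ⟨rfl, rfl, rfl⟩; exact g2 ⟨rfl, Nat.le_add_right _ _⟩),
              updB_w]
            exact hBw ℓ' j' i' g1 g2
          · intro ℓ' j' g1 g2
            rw [updW_b, updB_b, if_neg (by rintro ⟨h, _⟩; exact g2 h)]
            exact hBb ℓ' j' g1 g2
          · intro j'
            rw [updB_b]
            by_cases hj' : j' = j
            · subst hj'
              rw [if_pos (show l + 1 = l + 1 ∧ j' = j' from ⟨rfl, rfl⟩)]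
              have hterm : ∀ k' ∈ Finset.range K,
                  (updW B (l + 1) j' (H l + k) t).w (l + 1) j' (H l + k')
                    * g ((updW B (l + 1) j' (H l + k) t).b l (H l + k'))
                  = if k' = k then t * g (ζ k) else 0 := by
                intro k' hk'
                rw [updW_w, updW_b, hBbζ k']
                by_cases hkk : k' = k
                · subst hkk
                  rw [if_pos (show l + 1 = l + 1 ∧ j' = j' ∧ H l + k' = H l + k'
                      from ⟨rfl, rfl, rfl⟩), if_pos (rfl : k' = k')]
                · rw [if_neg (by omega), hBwOut j' _ (Nat.le_add_right _ _), zero_mul,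
                    if_neg hkk]
              rw [Finset.sum_congr rfl hterm,
                Finset.sum_ite_eq' (Finset.range K) k (fun _ => t * g (ζ k)),
                if_pos (Finset.mem_range.2 hkK), updW_b, hBbl1 j']
            · rw [if_neg (by tauto), updW_b, hBbl1 j']
              have hw0 : ∀ k' ∈ Finset.range K,
                  (updW B (l + 1) j (H l + k) t).w (l + 1) j' (H l + k')
                    * g (B.b l (H l + k')) = 0 := by
                intro k' hk'
                rw [updW_w, if_neg (by rintro ⟨_, rfl, _⟩; exact hj' rfl),
                  hBwOut j' _ (Nat.le_add_right _ _), zero_mul]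
              rw [Finset.sum_eq_zero hw0, add_zero]
          · intro k' hk'
            right
            intro i'
            rw [updW_w, if_neg (by omega)]
            exact hBwIn _ _ (Nat.le_add_right _ _)
        rw [hkey, hBwOut j _ (Nat.le_add_right _ _)]
        have hjH : j < H (l + 1) := by rw [hEH' _ (by omega)] at hj; exact hj
        exact deriv_comp_affine (fun u => Remp g H L P X Y loss (updB θ (l + 1) j u))
          (θ.b (l + 1) j) (g (ζ k)) (hθ.2 (l + 1) j (by omega) hlL hjH)
      · -- an old weight
        have hjH : j < H ℓ := by
          by_cases h : ℓ = l
          · subst h; omega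
          · rw [hEH' _ h] at hj; exact hj
        have hiH : i < H (ℓ - 1) := by
          by_cases h : ℓ - 1 = l
          · have hll1 : ℓ = l + 1 := by omega
            subst hll1
            simp only [Nat.add_sub_cancel]
            omega
          · rw [hEH' _ h] at hi; exact hi
        have hkey : (fun t => Remp g (enlargeH H l K) L P X Y loss (updW B ℓ j i t))
            = fun t => Remp g H L P X Y loss (updW θ ℓ j i t) := by
          funext t
          apply Remp_eq hl1 hlL
          refine ⟨?_, ?_, ?_, ?_⟩
          · intro ℓ' j' i' g1 g2
            rw [updW_w, updW_w]
            by_cases hc : ℓ' = ℓ ∧ j' = j ∧ i' = i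
            · rw [if_pos hc, if_pos hc]
            · rw [if_neg hc, if_neg hc]
              exact hBw ℓ' j' i' g1 g2
          · intro ℓ' j' g1 g2
            rw [updW_b, updW_b]
            exact hBb ℓ' j' g1 g2
          · intro j'
            rw [updW_b, updW_b, hBbl1 j']
            have hw0 : ∀ k' ∈ Finset.range K,
                (updW B ℓ j i t).w (l + 1) j' (H l + k')
                  * g (B.b l (H l + k')) = 0 := by
              intro k' hk'
              have hneg : ¬(l + 1 = ℓ ∧ j' = j ∧ H l + k' = i) := by
                rintro ⟨h1', h2', h3'⟩
                exact c2 ⟨h1'.symm, by omega⟩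
              rw [updW_w, if_neg hneg, hBwOut j' _ (Nat.le_add_right _ _), zero_mul]
            rw [Finset.sum_eq_zero hw0, add_zero]
          · intro k' hk'
            left
            intro j'
            have hneg : ¬(l + 1 = ℓ ∧ j' = j ∧ H l + k' = i) := by
              rintro ⟨h1', h2', h3'⟩
              exact c2 ⟨h1'.symm, by omega⟩
            rw [updW_w, if_neg hneg]
            exact hBwOut j' _ (Nat.le_add_right _ _)
        rw [hkey, hBw ℓ j i c1 c2]
        exact hθ.1 ℓ j i hℓ1 hℓL hjH hiH
  · -- biases
    intro ℓ j hℓ1 hℓL hj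
    by_cases c1 : ℓ = l ∧ H l ≤ j
    · -- bias of a new neuron : risk is constant
      obtain ⟨rfl, hjl⟩ := c1
      have hconst : (fun t => Remp g (enlargeH H ℓ K) L P X Y loss (updB B ℓ j t))
          = fun _ => Remp g H L P X Y loss θ := by
        funext t
        apply Remp_eq hl1 hlL
        refine ⟨?_, ?_, ?_, ?_⟩
        · intro ℓ' j' i' g1 g2
          rw [updB_w]
          exact hBw ℓ' j' i' g1 g2
        · intro ℓ' j' g1 g2
          rw [updB_b, if_neg (by rintro ⟨h, h'⟩; exact g1 ⟨h, h' ▸ hjl⟩)]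
          exact hBb ℓ' j' g1 g2
        · intro j'
          have hw0 : ∀ k ∈ Finset.range K,
              (updB B ℓ j t).w (ℓ + 1) j' (H ℓ + k)
                * g ((updB B ℓ j t).b ℓ (H ℓ + k)) = 0 := by
            intro k hk
            rw [updB_w, hBwOut j' _ (Nat.le_add_right _ _), zero_mul]
          rw [Finset.sum_eq_zero hw0, add_zero, updB_b, if_neg (by omega), hBbl1 j']
        · intro k hk
          left
          intro j'
          rw [updB_w]
          exact hBwOut j' _ (Nat.le_add_right _ _)
      rw [hconst]
      exact deriv_const _ _
    · by_cases c2 : ℓ = l + 1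
      · -- bias of layer l+1
        subst c2
        have hkey : (fun t => Remp g (enlargeH H l K) L P X Y loss (updB B (l + 1) j t))
            = fun t => Remp g H L P X Y loss (updB θ (l + 1) j t) := by
          funext t
          apply Remp_eq hl1 hlL
          refine ⟨?_, ?_, ?_, ?_⟩
          · intro ℓ' j' i' g1 g2
            rw [updB_w, updB_w]
            exact hBw ℓ' j' i' g1 g2
          · intro ℓ' j' g1 g2
            rw [updB_b, updB_b, if_neg (by rintro ⟨h, _⟩; exact g2 h),
              if_neg (by rintro ⟨h, _⟩; exact g2 h)]
            exact hBb ℓ' j' g1 g2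
          · intro j'
            have hw0 : ∀ k ∈ Finset.range K,
                (updB B (l + 1) j t).w (l + 1) j' (H l + k)
                  * g ((updB B (l + 1) j t).b l (H l + k)) = 0 := by
              intro k hk
              rw [updB_w, hBwOut j' _ (Nat.le_add_right _ _), zero_mul]
            rw [Finset.sum_eq_zero hw0, add_zero, updB_b, updB_b]
            by_cases hj' : j' = j
            · subst hj'
              rw [if_pos (show l + 1 = l + 1 ∧ j' = j' from ⟨rfl, rfl⟩),
                if_pos (show l + 1 = l + 1 ∧ j' = j' from ⟨rfl, rfl⟩)]
            · rw [if_neg (by tauto), if_neg (by tauto)]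
              exact (hBbl1 j').symm
          · intro k hk
            left
            intro j'
            rw [updB_w]
            exact hBwOut j' _ (Nat.le_add_right _ _)
        rw [hkey, hBbl1 j]
        have hjH : j < H (l + 1) := by rw [hEH' _ (by omega)] at hj; exact hj
        exact hθ.2 (l + 1) j (by omega) hℓL hjH
      · -- an old bias
        have hjH : j < H ℓ := by
          by_cases h : ℓ = l
          · subst h; omega
          · rw [hEH' _ h] at hj; exact hj
        have hkey : (fun t => Remp g (enlargeH H l K) L P X Y loss (updB B ℓ j t))
            = fun t => Remp g H L P X Y loss (updB θ ℓ j t) := by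
          funext t
          apply Remp_eq hl1 hlL
          refine ⟨?_, ?_, ?_, ?_⟩
          · intro ℓ' j' i' g1 g2
            rw [updB_w, updB_w]
            exact hBw ℓ' j' i' g1 g2
          · intro ℓ' j' g1 g2
            rw [updB_b, updB_b]
            by_cases hc : ℓ' = ℓ ∧ j' = j
            · rw [if_pos hc, if_pos hc]
            · rw [if_neg hc, if_neg hc]
              exact hBb ℓ' j' g1 g2
          · intro j'
            have hw0 : ∀ k ∈ Finset.range K,
                (updB B ℓ j t).w (l + 1) j' (H l + k)
                  * g ((updB B ℓ j t).b l (H l + k)) = 0 := by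
              intro k hk
              rw [updB_w, hBwOut j' _ (Nat.le_add_right _ _), zero_mul]
            rw [Finset.sum_eq_zero hw0, add_zero, updB_b, updB_b,
              if_neg (by rintro ⟨h, _⟩; exact c2 h.symm),
              if_neg (by rintro ⟨h, _⟩; exact c2 h.symm)]
            exact (hBbl1 j').symm
          · intro k hk
            left
            intro j'
            rw [updB_w]
            exact hBwOut j' _ (Nat.le_add_right _ _)
        rw [hkey, hBb ℓ j c1 c2]
        exact hθ.2 ℓ j hℓ1 hℓL hjH
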